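/- A synchronous nonsignaling correlation p from a finite set X to a finite set Y is a monomorphism in the category whose morphisms are synchronous nonsignaling correlations (i.e., for every finite set U and every pair of synchronous nonsignaling correlations q_1, q_2 from U to X, p ∘ q_1 = p ∘ q_2 implies q_1 = q_2) if and only if the stochastic matrix of p has zero right nullspace. -/

import Mathlib

open Finset Matrix Kronecker
open scoped ComplexOrder


private lemma sum_swap3 {A B C : Type*} [Fintype A] [Fintype B] [Fintype C] (f : A → B → C → ℝ) :
    ∑ a, ∑ b, ∑ c, f a b c = ∑ b, ∑ c, ∑ a, f a b c := by
  rw [Finset.sum_comm]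
  exact Finset.sum_congr rfl fun b _ => Finset.sum_comm

private lemma sum_swap4 {A B C D : Type*} [Fintype A] [Fintype B] [Fintype C] [Fintype D]
    (f : A → B → C → D → ℝ) :
    ∑ a, ∑ b, ∑ c, ∑ d, f a b c d = ∑ c, ∑ d, ∑ a, ∑ b, f a b c d := by
  calc ∑ a, ∑ b, ∑ c, ∑ d, f a b c d
      = ∑ a, ∑ c, ∑ d, ∑ b, f a b c d :=
        Finset.sum_congr rfl fun a _ => sum_swap3 _
    _ = ∑ c, ∑ a, ∑ d, ∑ b, f a b c d := Finset.sum_comm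
    _ = ∑ c, ∑ d, ∑ a, ∑ b, f a b c d :=
        Finset.sum_congr rfl fun c _ => Finset.sum_comm

noncomputable def corrV {X : Type*} [Fintype X] (u : X → X → ℝ) (a : X) : ℝ := ∑ b, u a b
noncomputable def corrW {X : Type*} [Fintype X] (u : X → X → ℝ) (b : X) : ℝ := ∑ a, u a b

open Classical in
noncomputable def corrD {X : Type*} [Fintype X] (u : X → X → ℝ) (a b : X) (i j : Bool) : ℝ :=
  match i, j with
  | false, false => if a = b then corrV u a else 0
  | false, true  => u a b
  | true,  false => -(u a b) + (if a = b then corrV u a + corrW u a else 0)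
  | true,  true  => if a = b then corrW u a else 0

open Classical in
noncomputable def corrBase (X : Type*) [Fintype X] (a b : X) (i j : Bool) : ℝ :=
  if i = j then (if a = b then 1/(Fintype.card X : ℝ) else 0)
  else 1/((Fintype.card X : ℝ) * (Fintype.card X : ℝ))

private lemma corrBase_nonneg (X : Type*) [Fintype X] (a b : X) (i j : Bool) :
    0 ≤ corrBase X a b i j := by
  unfold corrBase
  split
  · split
    · positivity
    · exact le_refl 0
  · positivity

private lemma corrBase_rowsum (X : Type*) [Fintype X] [Nonempty X] (a : X) (i j : Bool) :
    ∑ b : X, corrBase X a b i j = 1 / (Fintype.card X : ℝ) := by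
  classical
  have hn : (0:ℝ) < (Fintype.card X : ℝ) := by exact_mod_cast Fintype.card_pos
  unfold corrBase
  split
  · simp [Finset.sum_ite_eq]
  · rw [Finset.sum_const, Finset.card_univ, nsmul_eq_mul]
    field_simp

private lemma corrBase_colsum (X : Type*) [Fintype X] [Nonempty X] (b : X) (i j : Bool) :
    ∑ a : X, corrBase X a b i j = 1 / (Fintype.card X : ℝ) := by
  classical
  have hn : (0:ℝ) < (Fintype.card X : ℝ) := by exact_mod_cast Fintype.card_pos
  unfold corrBase
  split
  · simp [Finset.sum_ite_eq']
  · rw [Finset.sum_const, Finset.card_univ, nsmul_eq_mul]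
    field_simp

private lemma corrBase_sum (X : Type*) [Fintype X] [Nonempty X] (i j : Bool) :
    ∑ a : X, ∑ b : X, corrBase X a b i j = 1 := by
  have hn : (0:ℝ) < (Fintype.card X : ℝ) := by exact_mod_cast Fintype.card_pos
  simp only [corrBase_rowsum]
  rw [Finset.sum_const, Finset.card_univ, nsmul_eq_mul]
  field_simp

private lemma corrD_rowsum {X : Type*} [Fintype X] (u : X → X → ℝ) (a : X) (i j : Bool) :
    ∑ b : X, corrD u a b i j = if i then corrW u a else corrV u a := by
  classical
  cases i <;> cases j <;> simp [corrD, corrV, Finset.sum_ite_eq, Finset.sum_add_distrib,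
    Finset.sum_neg_distrib]

private lemma corrD_colsum {X : Type*} [Fintype X] (u : X → X → ℝ) (b : X) (i j : Bool) :
    ∑ a : X, corrD u a b i j = if j then corrW u b else corrV u b := by
  classical
  cases i <;> cases j <;> simp [corrD, corrW, Finset.sum_ite_eq', Finset.sum_add_distrib,
    Finset.sum_neg_distrib]

/-- A correlation from a finite set `X` to a finite set `Y`. -/
def IsCorrelation {X Y : Type*} [Fintype X] [Fintype Y]
    (p : Y → Y → X → X → ℝ) : Prop :=
  (∀ yA yB xA xB, 0 ≤ p yA yB xA xB) ∧
  ∀ xA xB, (∑ yA : Y, ∑ yB : Y, p yA yB xA xB) = 1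

/-- A correlation is synchronous if `p yA yB x x = 0` whenever `yA ≠ yB`. -/
def IsSynchronous {X Y : Type*} (p : Y → Y → X → X → ℝ) : Prop :=
  ∀ (x : X) (yA yB : Y), yA ≠ yB → p yA yB x x = 0

/-- Composition of correlations via Kolmogorov's law. -/
def Comp {X Y Z : Type*} [Fintype Y]
    (q : Z → Z → Y → Y → ℝ) (p : Y → Y → X → X → ℝ) :
    Z → Z → X → X → ℝ :=
  fun zA zB xA xB => ∑ yA : Y, ∑ yB : Y, q zA zB yA yB * p yA yB xA xB

/-- The identity correlation on `X`. -/
def IdCorr (X : Type*) [DecidableEq X] : X → X → X → X → ℝ :=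
  fun xA' xB' xA xB =>
    (if xA' = xA then (1 : ℝ) else 0) * (if xB' = xB then (1 : ℝ) else 0)

/-- The nonsignaling condition. -/
def IsNonsignaling {X Y : Type*} [Fintype Y] (p : Y → Y → X → X → ℝ) : Prop :=
  (∀ yA xA xB xB', (∑ yB : Y, p yA yB xA xB) = ∑ yB : Y, p yA yB xA xB') ∧
  (∀ yB xA xA' xB, (∑ yA : Y, p yA yB xA xB) = ∑ yA : Y, p yA yB xA' xB)

/-- A classical (hidden variables) correlation. -/
def IsClassical {X Y : Type*} [Fintype X] [Fintype Y] (p : Y → Y → X → X → ℝ) : Prop :=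
  ∃ (n : ℕ) (μ : Fin n → ℝ) (PrA PrB : Y → X → Fin n → ℝ),
    (∀ ω, 0 ≤ μ ω) ∧ ((∑ ω, μ ω) = 1) ∧
    (∀ y x ω, 0 ≤ PrA y x ω) ∧ (∀ x ω, (∑ y : Y, PrA y x ω) = 1) ∧
    (∀ y x ω, 0 ≤ PrB y x ω) ∧ (∀ x ω, (∑ y : Y, PrB y x ω) = 1) ∧
    ∀ yA yB xA xB, p yA yB xA xB = ∑ ω, μ ω * PrA yA xA ω * PrB yB xB ω

/-- A quantum correlation. -/
def IsQuantum {X Y : Type*} [Fintype X] [Fintype Y] (p : Y → Y → X → X → ℝ) : Prop :=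
  ∃ (dA dB : ℕ), 0 < dA ∧ 0 < dB ∧
    ∃ (ρ : Matrix (Fin dA × Fin dB) (Fin dA × Fin dB) ℂ)
      (E : X → Y → Matrix (Fin dA) (Fin dA) ℂ)
      (F : X → Y → Matrix (Fin dB) (Fin dB) ℂ),
      ρ.PosSemidef ∧ ρ.trace = 1 ∧
      (∀ x y, (E x y).PosSemidef) ∧ (∀ x, (∑ y : Y, E x y) = 1) ∧
      (∀ x y, (F x y).PosSemidef) ∧ (∀ x, (∑ y : Y, F x y) = 1) ∧
      ∀ yA yB xA xB, (ρ * (E xA yA ⊗ₖ F xB yB)).trace = (p yA yB xA xB : ℂ)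

/-- A symmetric correlation. -/
def IsSymmetric {X Y : Type*} (p : Y → Y → X → X → ℝ) : Prop :=
  ∀ yA yB xA xB, p yA yB xA xB = p yB yA xB xA

/-- In the category of synchronous nonsignaling correlations, monomorphisms are precisely
the correlations whose stochastic matrix has zero right nullspace. -/
theorem nonsignaling_mono_iff_zero_right_nullspace {X Y : Type*} [Fintype X] [Fintype Y]
    (p : Y → Y → X → X → ℝ)
    (hp : IsCorrelation p) (hps : IsSynchronous p) (hpn : IsNonsignaling p) :
    (∀ (U : Type) [Fintype U] (q₁ q₂ : X → X → U → U → ℝ),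
      IsCorrelation q₁ → IsSynchronous q₁ → IsNonsignaling q₁ →
      IsCorrelation q₂ → IsSynchronous q₂ → IsNonsignaling q₂ →
      Comp p q₁ = Comp p q₂ → q₁ = q₂) ↔
    (∀ u : X → X → ℝ,
      (∀ yA yB, (∑ xA : X, ∑ xB : X, p yA yB xA xB * u xA xB) = 0) → u = 0) := by
  constructor
  · -- mono implies zero right nullspace
    intro hmono u hu
    by_cases hX : IsEmpty X
    · funext a; exact isEmptyElim a
    rw [not_isEmpty_iff] at hX
    classical
    have hn0 : (0:ℝ) < (Fintype.card X : ℝ) := by exact_mod_cast Fintype.card_pos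
    have hn1 : (1:ℝ) ≤ (Fintype.card X : ℝ) := by exact_mod_cast Fintype.card_pos
    set n : ℝ := (Fintype.card X : ℝ) with hndef
    -- collapse lemmas from synchronicity
    have hcol : ∀ (y : Y) (a : X), (∑ yB : Y, p y yB a a) = p y y a a := by
      intro y a
      rw [Finset.sum_eq_single y]
      · intro b _ hb
        exact hps a y b fun h => hb h.symm
      · intro h; exact absurd (Finset.mem_univ y) h
    have hcol' : ∀ (y : Y) (b : X), (∑ yA : Y, p yA y b b) = p y y b b := by
      intro y b
      rw [Finset.sum_eq_single y]
      · intro c _ hc; exact hps b c y hc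
      · intro h; exact absurd (Finset.mem_univ y) h
    -- total sum of u is zero
    have s0 : ∑ a : X, ∑ b : X, u a b = 0 := by
      have h1 : ∑ yA : Y, ∑ yB : Y, ∑ a : X, ∑ b : X, p yA yB a b * u a b = 0 := by
        simp [hu]
      rw [sum_swap4] at h1
      have h2 : ∀ a b : X, (∑ yA : Y, ∑ yB : Y, p yA yB a b * u a b) = u a b := by
        intro a b
        have h3 : ∑ yA : Y, ∑ yB : Y, p yA yB a b * u a b
            = (∑ yA : Y, ∑ yB : Y, p yA yB a b) * u a b := by
          rw [Finset.sum_mul]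
          exact Finset.sum_congr rfl fun yA _ => (Finset.sum_mul _ _ _).symm
        rw [h3, hp.2 a b, one_mul]
      simp only [h2] at h1
      exact h1
    have hsv : ∑ a : X, corrV u a = 0 := s0
    have hsw : ∑ b : X, corrW u b = 0 := by
      calc ∑ b : X, corrW u b = ∑ b : X, ∑ a : X, u a b := rfl
        _ = ∑ a : X, ∑ b : X, u a b := Finset.sum_comm
        _ = 0 := s0
    -- the marginal stochastic matrix kills corrV u and corrW u
    have hMv : ∀ y : Y, ∑ x : X, p y y x x * corrV u x = 0 := by
      intro y
      have h1 : ∑ yB : Y, ∑ a : X, ∑ b : X, p y yB a b * u a b = 0 := by simp [hu]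
      rw [sum_swap3] at h1
      have h2 : ∀ a b : X, (∑ yB : Y, p y yB a b * u a b) = p y y a a * u a b := by
        intro a b
        rw [← Finset.sum_mul, hpn.1 y a b a, hcol y a]
      simp only [h2] at h1
      simpa only [corrV, Finset.mul_sum] using h1
    have hMw : ∀ y : Y, ∑ x : X, p y y x x * corrW u x = 0 := by
      intro y
      have h1 : ∑ yA : Y, ∑ a : X, ∑ b : X, p yA y a b * u a b = 0 := by simp [hu]
      rw [sum_swap3] at h1
      have h2 : ∀ a b : X, (∑ yA : Y, p yA y a b * u a b) = p y y b b * u a b := by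
        intro a b
        rw [← Finset.sum_mul, hpn.2 y a b b, hcol' y b]
      simp only [h2] at h1
      calc ∑ x : X, p y y x x * corrW u x
          = ∑ b : X, ∑ a : X, p y y b b * u a b := by
            simp only [corrW, Finset.mul_sum]
        _ = ∑ a : X, ∑ b : X, p y y b b * u a b := Finset.sum_comm
        _ = 0 := h1
    -- kernel facts
    have Kdiag : ∀ (c : X → ℝ), (∀ y : Y, ∑ x : X, p y y x x * c x = 0) →
        ∀ yA yB : Y, (∑ a : X, ∑ b : X, p yA yB a b * (if a = b then c a else 0)) = 0 := by
      intro c hc yA yB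
      have h1 : ∀ a : X,
          (∑ b : X, p yA yB a b * (if a = b then c a else 0)) = p yA yB a a * c a := by
        intro a
        rw [Finset.sum_eq_single a]
        · simp
        · intro b _ hb
          rw [if_neg (fun h => hb h.symm), mul_zero]
        · intro h; exact absurd (Finset.mem_univ a) h
      simp only [h1]
      by_cases hy : yA = yB
      · subst hy; exact hc yA
      · have h2 : ∀ a : X, p yA yB a a * c a = 0 := fun a => by
          rw [hps a yA yB hy, zero_mul]
        simp [h2]
    have Kd : ∀ (yA yB : Y) (i j : Bool),
        (∑ a : X, ∑ b : X, p yA yB a b * corrD u a b i j) = 0 := by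
      intro yA yB i j
      cases i <;> cases j
      · simpa [corrD] using Kdiag (corrV u) hMv yA yB
      · simpa [corrD] using hu yA yB
      · have h1 := hu yA yB
        have h2 := Kdiag (fun x => corrV u x + corrW u x) (fun y => by
          have := hMv y; have := hMw y
          simp only [mul_add, Finset.sum_add_distrib]
          linarith) yA yB
        simp only [corrD, mul_add, mul_neg, Finset.sum_add_distrib, Finset.sum_neg_distrib]
        rw [h1, h2]; ring
      · simpa [corrD] using Kdiag (corrW u) hMw yA yB
    -- bounds
    set B : ℝ := ∑ a : X, ∑ b : X, |u a b| with hBdef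
    have hB0 : 0 ≤ B :=
      Finset.sum_nonneg fun a _ => Finset.sum_nonneg fun b _ => abs_nonneg _
    have hub : ∀ a b : X, |u a b| ≤ B := by
      intro a b
      calc |u a b| ≤ ∑ b' : X, |u a b'| :=
            Finset.single_le_sum (f := fun b' => |u a b'|)
              (fun x _ => abs_nonneg _) (Finset.mem_univ b)
        _ ≤ B := Finset.single_le_sum (f := fun a' => ∑ b' : X, |u a' b'|)
            (fun x _ => Finset.sum_nonneg fun _ _ => abs_nonneg _) (Finset.mem_univ a)
    have hvb : ∀ a : X, |corrV u a| ≤ B := by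
      intro a
      calc |corrV u a| ≤ ∑ b : X, |u a b| := Finset.abs_sum_le_sum_abs _ _
        _ ≤ B := Finset.single_le_sum (f := fun a' => ∑ b' : X, |u a' b'|)
            (fun x _ => Finset.sum_nonneg fun _ _ => abs_nonneg _) (Finset.mem_univ a)
    have hwb : ∀ b : X, |corrW u b| ≤ B := by
      intro b
      calc |corrW u b| ≤ ∑ a : X, |u a b| := Finset.abs_sum_le_sum_abs _ _
        _ ≤ ∑ a : X, ∑ b' : X, |u a b'| := Finset.sum_le_sum fun a _ =>
            Finset.single_le_sum (f := fun b' => |u a b'|)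
              (fun x _ => abs_nonneg _) (Finset.mem_univ b)
        _ = B := rfl
    have hdb : ∀ (a b : X) (i j : Bool), |corrD u a b i j| ≤ 3 * B := by
      intro a b i j
      have h1 := hub a b; have h2 := hvb a; have h3 := hwb a
      cases i <;> cases j <;> simp only [corrD]
      · split
        · linarith
        · rw [abs_zero]; linarith
      · linarith
      · split
        · calc |(-(u a b)) + (corrV u a + corrW u a)|
              ≤ |(-(u a b))| + |corrV u a + corrW u a| := abs_add_le _ _
            _ ≤ |u a b| + (|corrV u a| + |corrW u a|) := by
                rw [abs_neg]
                exact add_le_add le_rfl (abs_add_le _ _)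
            _ ≤ 3 * B := by linarith
        · rw [add_zero, abs_neg]; linarith
      · split
        · linarith
        · rw [abs_zero]; linarith
    have h3B : (0:ℝ) < 3 * B + 1 := by linarith
    set ε : ℝ := 1 / ((n * n) * (3 * B + 1)) with hεdef
    have hε0 : 0 < ε := by
      rw [hεdef]; positivity
    have hεkey : ε * (3 * B + 1) = 1 / (n * n) := by
      rw [hεdef]; field_simp
    have hεd : ∀ (a b : X) (i j : Bool), |ε * corrD u a b i j| ≤ 1 / (n * n) := by
      intro a b i j
      rw [abs_mul, abs_of_pos hε0]
      calc ε * |corrD u a b i j| ≤ ε * (3 * B) :=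
            mul_le_mul_of_nonneg_left (hdb a b i j) hε0.le
        _ ≤ ε * (3 * B + 1) := by nlinarith
        _ = 1 / (n * n) := hεkey
    have hnn : 1 / (n * n) ≤ 1 / n := by
      apply one_div_le_one_div_of_le hn0
      nlinarith
    -- the two correlations
    set q₂ : X → X → Bool → Bool → ℝ := fun a b i j => corrBase X a b i j with hq2def
    set q₁ : X → X → Bool → Bool → ℝ :=
      fun a b i j => corrBase X a b i j + ε * corrD u a b i j with hq1def
    have hq2c : IsCorrelation q₂ := by
      constructor
      · intro a b i j; exact corrBase_nonneg X a b i j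
      · intro i j; exact corrBase_sum X i j
    have hq2s : IsSynchronous q₂ := by
      intro i a b hab
      simp [hq2def, corrBase, hab]
    have hq2n : IsNonsignaling q₂ := by
      constructor
      · intro a i j j'
        simp only [hq2def, corrBase_rowsum]
      · intro b i i' j
        simp only [hq2def, corrBase_colsum]
    have hdsync : ∀ (i : Bool) (a b : X), a ≠ b → corrD u a b i i = 0 := by
      intro i a b hab
      cases i <;> simp [corrD, hab]
    have hq1c : IsCorrelation q₁ := by
      constructor
      · intro a b i j
        by_cases hij : i = j
        · subst hij
          by_cases hab : a = b
          · subst hab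
            have h1 : corrBase X a a i i = 1 / n := by simp [corrBase, hndef]
            have h2 := (abs_le.mp (hεd a a i i)).1
            simp only [hq1def]
            rw [h1]
            linarith
          · have h1 : corrBase X a b i i = 0 := by simp [corrBase, hab]
            simp only [hq1def]
            rw [h1, hdsync i a b hab, mul_zero, add_zero]
        · have h1 : corrBase X a b i j = 1 / (n * n) := by simp [corrBase, hij, hndef]
          have h2 := (abs_le.mp (hεd a b i j)).1
          simp only [hq1def]
          rw [h1]
          linarith
      · intro i j
        have hds : ∑ a : X, ∑ b : X, corrD u a b i j = 0 := by
          simp only [corrD_rowsum]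
          cases i
          · simpa using hsv
          · simpa using hsw
        simp only [hq1def]
        rw [Finset.sum_congr rfl fun a _ => Finset.sum_add_distrib,
          Finset.sum_add_distrib, corrBase_sum X i j]
        have : ∑ a : X, ∑ b : X, ε * corrD u a b i j = ε * 0 := by
          rw [← hds, Finset.mul_sum]
          exact Finset.sum_congr rfl fun a _ => (Finset.mul_sum _ _ _).symm
        rw [this, mul_zero, add_zero]
    have hq1s : IsSynchronous q₁ := by
      intro i a b hab
      simp only [hq1def]
      rw [hdsync i a b hab, mul_zero, add_zero]
      simp [corrBase, hab]
    have hq1n : IsNonsignaling q₁ := by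
      have hrow : ∀ (a : X) (i j : Bool), (∑ b : X, q₁ a b i j)
          = 1 / n + ε * (if i then corrW u a else corrV u a) := by
        intro a i j
        simp only [hq1def]
        rw [Finset.sum_add_distrib, corrBase_rowsum, ← Finset.mul_sum, corrD_rowsum]
      have hcolq : ∀ (b : X) (i j : Bool), (∑ a : X, q₁ a b i j)
          = 1 / n + ε * (if j then corrW u b else corrV u b) := by
        intro b i j
        simp only [hq1def]
        rw [Finset.sum_add_distrib, corrBase_colsum, ← Finset.mul_sum, corrD_colsum]
      constructor
      · intro a i j j'
        rw [hrow a i j, hrow a i j']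
      · intro b i i' j
        rw [hcolq b i j, hcolq b i' j]
    have hcomp : Comp p q₁ = Comp p q₂ := by
      funext yA yB i j
      simp only [Comp, hq1def, hq2def]
      have h1 : ∀ a b : X, p yA yB a b * (corrBase X a b i j + ε * corrD u a b i j)
          = p yA yB a b * corrBase X a b i j + ε * (p yA yB a b * corrD u a b i j) := by
        intro a b; ring
      simp only [h1, Finset.sum_add_distrib, ← Finset.mul_sum]
      rw [Kd yA yB i j, mul_zero, add_zero]
    have hq := hmono Bool q₁ q₂ hq1c hq1s hq1n hq2c hq2s hq2n hcomp
    funext a b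
    have h1 := congrFun (congrFun (congrFun (congrFun hq a) b) false) true
    simp only [hq1def, hq2def, corrD] at h1
    have h2 : ε * u a b = 0 := by linarith
    have h3 := (mul_eq_zero.mp h2).resolve_left (ne_of_gt hε0)
    exact h3
  · -- zero right nullspace implies mono
    intro h U _ q₁ q₂ hc₁ _ _ hc₂ _ _ hcomp
    funext a b i j
    have h0 : (fun xA xB => q₁ xA xB i j - q₂ xA xB i j) = 0 := by
      apply h
      intro yA yB
      have hc := congrFun (congrFun (congrFun (congrFun hcomp yA) yB) i) j
      simp only [Comp] at hc
      simp only [mul_sub, Finset.sum_sub_distrib]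
      rw [hc, sub_self]
    have h1 := congrFun (congrFun h0 a) b
    simpa [sub_eq_zero] using h1
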